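/- Let $n \ge 3$, $A$ positive definite symmetric $n \times n$, $b \ne 0$, $b^2 = b^T A^{-1} b$, $\alpha^2(y)=y^TAy$, $\beta(y)=b^Ty$. Suppose $R(y) = y^T M y$ is a quadratic form (M symmetric) such that the polynomial $b^4 R(y) - 2 b^2 \beta(y) \rho(y) + \beta(y)^2 r$ is divisible by $b^2\alpha^2 - \beta^2$, where $\rho(y) = (M A^{-1} b)^T y$ and $r = b^T A^{-1} M A^{-1} b$. Then there exists $c \in \mathbb{R}$ such that $b^4 R - 2b^2\beta\rho + \beta^2 r = c\, b^2 (b^2\alpha^2 - \beta^2)$, and consequently there exist $c, d \in \mathbb{R}$ and a linear form $\theta$ with $\theta(A^{-1}b) = 0$ such that $R = c\,\alpha^2 + d\,\beta^2 + 2\beta\theta$. -/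

import Mathlib

open Matrix MvPolynomial

noncomputable def quadPoly {n : ℕ} (A : Matrix (Fin n) (Fin n) ℝ) : MvPolynomial (Fin n) ℝ :=
  ∑ i, ∑ j, C (A i j) * X i * X j

noncomputable def linPoly {n : ℕ} (b : Fin n → ℝ) : MvPolynomial (Fin n) ℝ :=
  ∑ i, C (b i) * X i

lemma quadPoly_isHom {n : ℕ} (A : Matrix (Fin n) (Fin n) ℝ) :
    (quadPoly A).IsHomogeneous 2 := by
  apply IsHomogeneous.sum
  intro i _
  apply IsHomogeneous.sum
  intro j _
  exact ((isHomogeneous_C _ (A i j)).mul (isHomogeneous_X _ i)).mul (isHomogeneous_X _ j)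

lemma linPoly_isHom {n : ℕ} (b : Fin n → ℝ) : (linPoly b).IsHomogeneous 1 := by
  apply IsHomogeneous.sum
  intro i _
  exact (isHomogeneous_C _ (b i)).mul (isHomogeneous_X _ i)

/-- A divisor relation between homogeneous quadratics forces the quotient to be constant. -/
lemma div_isC {n : ℕ} {Q P q : MvPolynomial (Fin n) ℝ} (hQ : Q.IsHomogeneous 2)
    (hP : P.IsHomogeneous 2) (hQ0 : Q ≠ 0) (h : P = Q * q) : q = C (q.coeff 0) := by
  have key : ∀ k, Q * homogeneousComponent k q = homogeneousComponent (2 + k) P := by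
    intro k
    have e1 : homogeneousComponent (2 + k) P
        = ∑ i ∈ Finset.range (q.totalDegree + 1),
            homogeneousComponent (2 + k) (Q * homogeneousComponent i q) := by
      rw [h]
      conv_lhs => rw [← sum_homogeneousComponent q]
      rw [Finset.mul_sum, map_sum]
    have e2 : ∀ i, homogeneousComponent (2 + k) (Q * homogeneousComponent i q)
        = if 2 + k = 2 + i then Q * homogeneousComponent i q else 0 := fun i =>
      homogeneousComponent_of_mem (hQ.mul (homogeneousComponent_isHomogeneous i q))
    rw [e1]
    simp only [e2, add_right_inj, Finset.sum_ite_eq]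
    by_cases hk : k ∈ Finset.range (q.totalDegree + 1)
    · rw [if_pos hk]
    · rw [if_neg hk, homogeneousComponent_eq_zero, mul_zero]
      simp only [Finset.mem_range, not_lt] at hk
      omega
  have hz : ∀ k, k ≠ 0 → homogeneousComponent k q = 0 := by
    intro k hk
    have h2 : homogeneousComponent (2 + k) P = 0 := by
      rw [homogeneousComponent_of_mem hP, if_neg (by omega)]
    have h3 := key k
    rw [h2] at h3
    exact (mul_eq_zero.mp h3).resolve_left hQ0
  conv_lhs => rw [← sum_homogeneousComponent q]
  rw [Finset.sum_eq_single 0 (fun i _ hi => hz i hi)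
    (fun h0 => absurd (Finset.mem_range.mpr (Nat.succ_pos _)) h0)]
  exact homogeneousComponent_zero q

lemma linPoly_smul_sub {n : ℕ} (x y : ℝ) (u v : Fin n → ℝ) :
    linPoly (x • u - y • v) = C x * linPoly u - C y * linPoly v := by
  simp only [linPoly, Finset.mul_sum, ← Finset.sum_sub_distrib]
  refine Finset.sum_congr rfl fun i _ => ?_
  simp only [Pi.sub_apply, Pi.smul_apply, smul_eq_mul, C_sub, C_mul]
  ring

/-- The algebraic decomposition step. -/
lemma part2 {n : ℕ} (b2 c r' : ℝ) (hb2ne : b2 ≠ 0) (Xp α β ρ : MvPolynomial (Fin n) ℝ)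
    (hc : C (b2 ^ 2) * Xp - C (2 * b2) * β * ρ + C r' * β ^ 2
      = C (c * b2) * (C b2 * α - β ^ 2)) :
    Xp = C c * α + C (r' / b2 ^ 2 - c / b2) * β ^ 2 +
      2 * β * (C (1 / b2) * ρ - C (r' / b2 ^ 2) * β) := by
  have hC2 : (C (b2 ^ 2) : MvPolynomial (Fin n) ℝ) ≠ 0 := by
    simp [pow_eq_zero_iff, hb2ne]
  apply mul_left_cancel₀ hC2
  have h1 : (C (b2 ^ 2) : MvPolynomial (Fin n) ℝ) * C (1 / b2) = C b2 := by
    rw [← C_mul]; congr 1; field_simp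
  have h2 : (C (b2 ^ 2) : MvPolynomial (Fin n) ℝ) * C (r' / b2 ^ 2) = C r' := by
    rw [← C_mul]; congr 1; field_simp
  have h3 : (C (b2 ^ 2) : MvPolynomial (Fin n) ℝ) * C (r' / b2 ^ 2 - c / b2)
      = C r' - C (c * b2) := by
    rw [← C_mul, ← C_sub]; congr 1; field_simp
  have h4 : (C (b2 ^ 2) : MvPolynomial (Fin n) ℝ) * C c = C (c * b2) * C b2 := by
    rw [← C_mul, ← C_mul]; congr 1; ring
  have h5 : (C (2 * b2) : MvPolynomial (Fin n) ℝ) = 2 * C b2 := by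
    have h2' : (C (2 : ℝ) : MvPolynomial (Fin n) ℝ) = 2 := map_ofNat _ 2
    rw [C_mul, h2']
  linear_combination hc - α * h4 - β ^ 2 * h3 - 2 * (β * ρ) * h1 + 2 * β ^ 2 * h2 +
    (β * ρ) * h5

/-- For `n ≥ 3`, if the quadratic polynomial
`b⁴R - 2b²βρ + β²r` is divisible by `b²α² - β²` (with `R = yᵀMy`, `M` symmetric,
`ρ(y) = (MA⁻¹b)ᵀy`, `r = bᵀA⁻¹MA⁻¹b`), then the quotient is a constant
`c·b²`, and `R` decomposes as `cα² + dβ² + 2βθ` with `θ(A⁻¹b) = 0`. -/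
theorem stmt6 {n : ℕ} (hn : 3 ≤ n) (A : Matrix (Fin n) (Fin n) ℝ) (hA : A.PosDef)
    (b : Fin n → ℝ) (hb : b ≠ 0) (b2 : ℝ) (hb2 : b2 = b ⬝ᵥ A⁻¹ *ᵥ b)
    (M : Matrix (Fin n) (Fin n) ℝ) (hM : M.IsSymm)
    (hdvd : (C b2 * quadPoly A - (linPoly b) ^ 2) ∣
      (C (b2 ^ 2) * quadPoly M -
        C (2 * b2) * linPoly b * linPoly (M *ᵥ (A⁻¹ *ᵥ b)) +
        C (b ⬝ᵥ A⁻¹ *ᵥ (M *ᵥ (A⁻¹ *ᵥ b))) * (linPoly b) ^ 2)) :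
    (∃ c : ℝ,
      C (b2 ^ 2) * quadPoly M -
        C (2 * b2) * linPoly b * linPoly (M *ᵥ (A⁻¹ *ᵥ b)) +
        C (b ⬝ᵥ A⁻¹ *ᵥ (M *ᵥ (A⁻¹ *ᵥ b))) * (linPoly b) ^ 2 =
      C (c * b2) * (C b2 * quadPoly A - (linPoly b) ^ 2)) ∧
    ∃ c d : ℝ, ∃ t : Fin n → ℝ, t ⬝ᵥ (A⁻¹ *ᵥ b) = 0 ∧
      quadPoly M = C c * quadPoly A + C d * (linPoly b) ^ 2 +
        2 * linPoly b * linPoly t := by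
  have hb2pos : 0 < b2 := by
    have h := hA.inv.dotProduct_mulVec_pos hb
    simpa [hb2] using h
  have hb2ne : b2 ≠ 0 := ne_of_gt hb2pos
  set r := b ⬝ᵥ A⁻¹ *ᵥ (M *ᵥ (A⁻¹ *ᵥ b)) with hrdef
  have hmain : ∃ c : ℝ,
      C (b2 ^ 2) * quadPoly M -
        C (2 * b2) * linPoly b * linPoly (M *ᵥ (A⁻¹ *ᵥ b)) +
        C r * (linPoly b) ^ 2 =
      C (c * b2) * (C b2 * quadPoly A - (linPoly b) ^ 2) := by
    obtain ⟨q, hq⟩ := hdvd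
    by_cases hP0 : C (b2 ^ 2) * quadPoly M -
        C (2 * b2) * linPoly b * linPoly (M *ᵥ (A⁻¹ *ᵥ b)) +
        C r * (linPoly b) ^ 2 = 0
    · exact ⟨0, by rw [hP0]; simp⟩
    · have hQ0 : C b2 * quadPoly A - (linPoly b) ^ 2 ≠ 0 := fun h0 => by
        rw [h0, zero_mul] at hq
        exact hP0 hq
      have hQh : (C b2 * quadPoly A - (linPoly b) ^ 2).IsHomogeneous 2 := by
        refine IsHomogeneous.sub ?_ ?_
        · exact (isHomogeneous_C _ b2).mul (quadPoly_isHom A)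
        · exact (linPoly_isHom b).pow 2
      have hPh : (C (b2 ^ 2) * quadPoly M -
          C (2 * b2) * linPoly b * linPoly (M *ᵥ (A⁻¹ *ᵥ b)) +
          C r * (linPoly b) ^ 2).IsHomogeneous 2 := by
        refine IsHomogeneous.add (IsHomogeneous.sub ?_ ?_) ?_
        · exact (isHomogeneous_C _ _).mul (quadPoly_isHom M)
        · exact ((isHomogeneous_C _ _).mul (linPoly_isHom b)).mul (linPoly_isHom _)
        · exact (isHomogeneous_C _ _).mul ((linPoly_isHom b).pow 2)
      obtain ⟨e, he⟩ : ∃ e, q = C e := ⟨_, div_isC hQh hPh hQ0 hq⟩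
      refine ⟨e / b2, ?_⟩
      rw [hq, he, div_mul_cancel₀ _ hb2ne, mul_comm]
  refine ⟨hmain, ?_⟩
  obtain ⟨c, hc⟩ := hmain
  have hAinvT : (A⁻¹)ᵀ = A⁻¹ := by
    have hAT : Aᵀ = A := by
      ext i j
      have h := congrFun (congrFun hA.1 i) j
      simpa using h
    rw [Matrix.transpose_nonsing_inv, hAT]
  have hbv : b ᵥ* A⁻¹ = A⁻¹ *ᵥ b := by
    nth_rewrite 1 [← hAinvT]
    rw [vecMul_transpose]
  have hr : (M *ᵥ (A⁻¹ *ᵥ b)) ⬝ᵥ (A⁻¹ *ᵥ b) = r := by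
    rw [hrdef, dotProduct_mulVec b, hbv, dotProduct_comm]
  refine ⟨c, r / b2 ^ 2 - c / b2,
    (1 / b2) • (M *ᵥ (A⁻¹ *ᵥ b)) - (r / b2 ^ 2) • b, ?_, ?_⟩
  · rw [sub_dotProduct, smul_dotProduct, smul_dotProduct, hr, ← hb2,
      smul_eq_mul, smul_eq_mul]
    field_simp
    ring
  · rw [linPoly_smul_sub]
    exact part2 b2 c r hb2ne (quadPoly M) (quadPoly A) (linPoly b)
      (linPoly (M *ᵥ (A⁻¹ *ᵥ b))) hc
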